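/- There exists j_0 ∈ ℕ such that the following holds. Let ε > 0 and s > 5/2, and let {a_j} be a solution of the dyadic Euler model on [0,∞) with a_j(0) > 0 for all j ≥ 0, with ‖a(0)‖_{H^s} < ∞, and such that a_{j'}(0)² > λ_{j'}^{−3−ε} for some j' > j_0. Then the H^{3/2+ε} norm of the solution becomes unbounded in finite time: there exists a finite time T such that sup_{0 ≤ t < T} ‖a(t)‖_{H^{3/2+ε}} = ∞. -/

import Mathlib

open MeasureTheory Filter
open scoped ENNReal

/-- The (possibly infinite) squared `H^s` norm of a sequence, with `λ_j = lam ^ j`: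
`‖a‖_{H^s}² = Σ_j λ_j^{2s} a_j²`. -/
noncomputable def Hsq (lam s : ℝ) (a : ℕ → ℝ) : ℝ≥0∞ :=
  ∑' j : ℕ, ENNReal.ofReal ((lam ^ j) ^ (2 * s) * (a j) ^ 2)

/-- A solution of the dyadic Euler model (Friedlander–Pavlović / Katz–Pavlović) on
`[0,∞)`: `a_j' = λ_j^{5/2} a_{j-1}² − λ_{j+1}^{5/2} a_j a_{j+1}`, with `a_{-1} ≡ 0`. -/
def IsEulerSol (lam : ℝ) (a : ℕ → ℝ → ℝ) : Prop :=
  ∀ j : ℕ, ∀ t ∈ Set.Ici (0 : ℝ),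
    HasDerivWithinAt (a j)
      ((lam ^ j) ^ (5 / 2 : ℝ) * (if j = 0 then (0 : ℝ) else a (j - 1) t) ^ 2
        - (lam ^ (j + 1)) ^ (5 / 2 : ℝ) * a j t * a (j + 1) t) (Set.Ici 0) t


lemma pow_rpow_eq {lam : ℝ} (hl : 0 < lam) (j : ℕ) (x : ℝ) :
    ((lam ^ j : ℝ)) ^ x = lam ^ ((j : ℝ) * x) := by
  rw [← Real.rpow_natCast lam j, ← Real.rpow_mul hl.le]

lemma rpow_mul_nat {lam : ℝ} (hl : 0 < lam) (k : ℕ) (x : ℝ) :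
    lam ^ ((k:ℝ) * x) = (lam ^ x) ^ k := by
  rw [mul_comm, Real.rpow_mul hl.le, Real.rpow_natCast]

lemma rpow_comb {lam : ℝ} (hl : 0 < lam) {x y z : ℝ} (h : x + y = z) :
    lam ^ x * lam ^ y = lam ^ z := by rw [← Real.rpow_add hl, h]

lemma sq_le_to_le {x C r : ℝ} (hx : 0 ≤ x) (hC : 0 ≤ C) (hr : 0 ≤ r)
    (h : x^2 ≤ C * r^2) : x ≤ Real.sqrt C * r := by
  calc x = Real.sqrt (x^2) := (Real.sqrt_sq hx).symm
    _ ≤ Real.sqrt (C * r^2) := Real.sqrt_le_sqrt h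
    _ = Real.sqrt C * r := by rw [Real.sqrt_mul hC, Real.sqrt_sq hr]

lemma bound_F1 {lam B ε : ℝ} (hlam : 1 < lam) (hB : 0 ≤ B) {f : ℕ → ℝ}
    (hk : ∀ k : ℕ, f k ^ 2 ≤ B * lam ^ (-((k:ℝ)*(3+2*ε)))) (k : ℕ) :
    |(lam ^ k : ℝ) ^ (5/2:ℝ) * (if k = 0 then (0:ℝ) else f (k-1))^2|
      ≤ (B * lam ^ ((3:ℝ)+2*ε)) * (lam ^ (-(1/2)-2*ε : ℝ))^k := by
  have hl0 : (0:ℝ) < lam := lt_trans one_pos hlam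
  have hrp : (0:ℝ) < lam ^ ((3:ℝ)+2*ε) := Real.rpow_pos_of_pos hl0 _
  have hq : (0:ℝ) < lam ^ (-(1/2)-2*ε : ℝ) := Real.rpow_pos_of_pos hl0 _
  cases k with
  | zero => simp; positivity
  | succ k =>
    have h0 : (0:ℝ) ≤ (lam ^ (k+1) : ℝ) ^ (5/2:ℝ) :=
      Real.rpow_nonneg (pow_nonneg hl0.le _) _
    rw [abs_of_nonneg (by positivity)]
    simp only [Nat.succ_ne_zero, if_false, Nat.succ_sub_one]
    calc (lam ^ (k+1) : ℝ) ^ (5/2:ℝ) * f k ^ 2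
        ≤ (lam ^ (k+1) : ℝ) ^ (5/2:ℝ) * (B * lam ^ (-((k:ℝ)*(3+2*ε)))) :=
          mul_le_mul_of_nonneg_left (hk k) h0
      _ = (B * lam ^ ((3:ℝ)+2*ε)) * (lam ^ (-(1/2)-2*ε : ℝ))^(k+1) := by
          rw [pow_rpow_eq hl0, ← rpow_mul_nat hl0 (k+1) (-(1/2)-2*ε)]
          have e2 : lam ^ ((((k+1):ℕ):ℝ) * (5/2:ℝ)) * lam ^ (-((k:ℝ)*(3+2*ε)))
              = lam ^ ((3:ℝ)+2*ε) * lam ^ ((((k+1):ℕ):ℝ) * (-(1/2)-2*ε)) := by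
            rw [← Real.rpow_add hl0, ← Real.rpow_add hl0]
            congr 1; push_cast; ring
          linear_combination B * e2

lemma bound_f {lam B ε : ℝ} (hlam : 1 < lam) (hB : 0 ≤ B) {f : ℕ → ℝ}
    (hf : ∀ k, 0 ≤ f k)
    (hk : ∀ k : ℕ, f k ^ 2 ≤ B * lam ^ (-((k:ℝ)*(3+2*ε)))) (k : ℕ) :
    f k ≤ Real.sqrt B * (lam ^ (-(3/2+ε) : ℝ))^k := by
  have hl0 : (0:ℝ) < lam := lt_trans one_pos hlam
  have hρ : (0:ℝ) < lam ^ (-(3/2+ε) : ℝ) := Real.rpow_pos_of_pos hl0 _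
  apply sq_le_to_le (hf k) hB (pow_nonneg hρ.le k)
  have hsq : ((lam ^ (-(3/2+ε) : ℝ))^k)^2 = lam ^ (-((k:ℝ)*(3+2*ε))) := by
    rw [← pow_mul, ← rpow_mul_nat hl0 (k*2) (-(3/2+ε))]
    congr 1; push_cast; ring
  rw [hsq]; exact hk k

lemma bound_F2 {lam B ε : ℝ} (hlam : 1 < lam) (hB : 0 ≤ B) {f : ℕ → ℝ}
    (hf : ∀ k, 0 ≤ f k)
    (hk : ∀ k : ℕ, f k ^ 2 ≤ B * lam ^ (-((k:ℝ)*(3+2*ε)))) (k : ℕ) :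
    |(lam ^ (k+1) : ℝ) ^ (5/2:ℝ) * f k * f (k+1)|
      ≤ (B * lam ^ ((1:ℝ)-ε)) * (lam ^ (-(1/2)-2*ε : ℝ))^k := by
  have hl0 : (0:ℝ) < lam := lt_trans one_pos hlam
  have hρ : (0:ℝ) < lam ^ (-(3/2+ε) : ℝ) := Real.rpow_pos_of_pos hl0 _
  have hL0 : (0:ℝ) ≤ (lam ^ (k+1) : ℝ) ^ (5/2:ℝ) :=
    Real.rpow_nonneg (pow_nonneg hl0.le _) _
  have hfle := bound_f hlam hB hf hk
  rw [abs_of_nonneg (mul_nonneg (mul_nonneg hL0 (hf k)) (hf (k+1)))]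
  have hsB : (0:ℝ) ≤ Real.sqrt B := Real.sqrt_nonneg B
  calc (lam ^ (k+1) : ℝ) ^ (5/2:ℝ) * f k * f (k+1)
      ≤ (lam ^ (k+1) : ℝ) ^ (5/2:ℝ) * (Real.sqrt B * (lam ^ (-(3/2+ε) : ℝ))^k)
          * (Real.sqrt B * (lam ^ (-(3/2+ε) : ℝ))^(k+1)) := by
        apply mul_le_mul (mul_le_mul_of_nonneg_left (hfle k) hL0) (hfle (k+1))
          (hf (k+1)) (by positivity)
    _ = (B * lam ^ ((1:ℝ)-ε)) * (lam ^ (-(1/2)-2*ε : ℝ))^k := by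
        rw [pow_rpow_eq hl0 (k+1) (5/2:ℝ), ← rpow_mul_nat hl0 k (-(3/2+ε)),
          ← rpow_mul_nat hl0 (k+1) (-(3/2+ε)), ← rpow_mul_nat hl0 k (-(1/2)-2*ε)]
        have e2 : lam ^ ((((k+1):ℕ):ℝ) * (5/2:ℝ))
              * (lam ^ ((k:ℝ)*(-(3/2+ε))) * lam ^ ((((k+1):ℕ):ℝ)*(-(3/2+ε))))
            = lam ^ ((1:ℝ)-ε) * lam ^ ((k:ℝ) * (-(1/2)-2*ε)) := by
          rw [← Real.rpow_add hl0, ← Real.rpow_add hl0, ← Real.rpow_add hl0]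
          congr 1; push_cast; ring
        have hBB : Real.sqrt B * Real.sqrt B = B := Real.mul_self_sqrt hB
        linear_combination (Real.sqrt B * Real.sqrt B) * e2
          + (lam ^ ((1:ℝ)-ε) * lam ^ ((k:ℝ) * (-(1/2)-2*ε))) * hBB

lemma bound_Qt {lam B ε : ℝ} (hlam : 1 < lam) (hB : 0 ≤ B) {f : ℕ → ℝ}
    (hk : ∀ k : ℕ, f k ^ 2 ≤ B * lam ^ (-((k:ℝ)*(3+2*ε)))) (k : ℕ) :
    lam ^ (((k:ℝ)+1)*(5/2)) * f k ^ 2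
      ≤ (B * lam ^ ((5:ℝ)/2)) * (lam ^ (-(1/2)-2*ε : ℝ))^k := by
  have hl0 : (0:ℝ) < lam := lt_trans one_pos hlam
  have hL0 : (0:ℝ) ≤ lam ^ (((k:ℝ)+1)*(5/2)) := (Real.rpow_pos_of_pos hl0 _).le
  calc lam ^ (((k:ℝ)+1)*(5/2)) * f k ^ 2
      ≤ lam ^ (((k:ℝ)+1)*(5/2)) * (B * lam ^ (-((k:ℝ)*(3+2*ε)))) :=
        mul_le_mul_of_nonneg_left (hk k) hL0
    _ = (B * lam ^ ((5:ℝ)/2)) * (lam ^ (-(1/2)-2*ε : ℝ))^k := by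
        rw [← rpow_mul_nat hl0 k (-(1/2)-2*ε)]
        have e2 : lam ^ (((k:ℝ)+1)*(5/2)) * lam ^ (-((k:ℝ)*(3+2*ε)))
            = lam ^ ((5:ℝ)/2) * lam ^ ((k:ℝ) * (-(1/2)-2*ε)) := by
          rw [← Real.rpow_add hl0, ← Real.rpow_add hl0]
          congr 1; push_cast; ring
        linear_combination B * e2


lemma euler_pos {lam : ℝ} (hlam : 1 < lam) {a : ℕ → ℝ → ℝ} (hsol : IsEulerSol lam a)
    (hpos : ∀ j : ℕ, 0 < a j 0) : ∀ j : ℕ, ∀ t, 0 ≤ t → 0 < a j t := by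
  have hl0 : (0:ℝ) < lam := lt_trans one_pos hlam
  have hcont : ∀ j : ℕ, ContinuousOn (a j) (Set.Ici 0) :=
    fun j t ht => (hsol j t ht).continuousWithinAt
  intro j t ht
  set c : ℝ → ℝ := fun u => (lam ^ (j+1) : ℝ) ^ (5/2 : ℝ) * a (j+1) (max u 0) with hc
  have ccont : Continuous c := by
    apply continuous_const.mul
    exact (hcont (j+1)).comp_continuous (continuous_id.max continuous_const)
      (fun x => Set.mem_Ici.mpr (le_max_right x 0))
  set I : ℝ → ℝ := fun u => ∫ x in (0:ℝ)..u, c x with hIdef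
  have hI : ∀ u, HasDerivAt I (c u) u := fun u =>
    (ccont.integral_hasStrictDerivAt 0 u).hasDerivAt
  have Idiff : Differentiable ℝ I := fun u => (hI u).differentiableAt
  set g : ℝ → ℝ := fun u => a j u * Real.exp (I u) with hg
  have hmono : MonotoneOn g (Set.Ici 0) := by
    apply monotoneOn_of_deriv_nonneg (convex_Ici 0)
    · exact (hcont j).mul ((Real.continuous_exp.comp Idiff.continuous).continuousOn)
    · rw [interior_Ici]
      intro x hx
      have hda : HasDerivAt (a j)
          ((lam ^ j) ^ (5 / 2 : ℝ) * (if j = 0 then (0 : ℝ) else a (j - 1) x) ^ 2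
            - (lam ^ (j + 1)) ^ (5 / 2 : ℝ) * a j x * a (j + 1) x) x :=
        (hsol j x (Set.mem_Ici.mpr (le_of_lt (Set.mem_Ioi.mp hx)))).hasDerivAt (Ici_mem_nhds hx)
      exact (hda.mul ((hI x).exp)).differentiableAt.differentiableWithinAt
    · rw [interior_Ici]
      intro x hx
      have hx0 : (0:ℝ) ≤ x := le_of_lt hx
      have hda : HasDerivAt (a j)
          ((lam ^ j) ^ (5 / 2 : ℝ) * (if j = 0 then (0 : ℝ) else a (j - 1) x) ^ 2
            - (lam ^ (j + 1)) ^ (5 / 2 : ℝ) * a j x * a (j + 1) x) x :=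
        (hsol j x hx0).hasDerivAt (Ici_mem_nhds hx)
      have hgd := hda.mul ((hI x).exp)
      rw [show deriv g x = _ from hgd.deriv]
      have hmax : max x 0 = x := max_eq_left hx0
      have hcx : c x = (lam ^ (j+1) : ℝ) ^ (5/2 : ℝ) * a (j+1) x := by rw [hc]; simp [hmax]
      have hval : ((lam ^ j) ^ (5 / 2 : ℝ) * (if j = 0 then (0 : ℝ) else a (j - 1) x) ^ 2
            - (lam ^ (j + 1)) ^ (5 / 2 : ℝ) * a j x * a (j + 1) x) * Real.exp (I x)
            + a j x * (Real.exp (I x) * c x)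
          = (lam ^ j) ^ (5 / 2 : ℝ) * (if j = 0 then (0 : ℝ) else a (j - 1) x) ^ 2
              * Real.exp (I x) := by
        rw [hcx]; ring
      rw [hval]
      have h1 : (0:ℝ) ≤ (lam ^ j) ^ (5/2 : ℝ) :=
        Real.rpow_nonneg (pow_nonneg hl0.le j) _
      positivity
  have hkey := hmono (Set.self_mem_Ici) (Set.mem_Ici.mpr ht) ht
  have hI0 : I 0 = 0 := intervalIntegral.integral_same
  have hg0 : g 0 = a j 0 := by rw [hg]; simp [hI0]
  have hgt : g t = a j t * Real.exp (I t) := rfl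
  rw [hg0, hgt] at hkey
  nlinarith [Real.exp_pos (I t), hpos j]

set_option maxHeartbeats 1600000 in
lemma core_estimate {lam B ε : ℝ} (hlam : 1 < lam) (hε : 0 < ε) (hB : 0 ≤ B) {f : ℕ → ℝ}
    (hf : ∀ k, 0 < f k)
    (hk : ∀ k : ℕ, f k ^ 2 ≤ B * lam ^ (-((k:ℝ)*(3+2*ε)))) :
    (1 - lam ^ (-(5/4) : ℝ)) / ((lam ^ (-(5/4) : ℝ)) * (1 - lam ^ (-(5/4) : ℝ))⁻¹)^2
        * (∑' k, f k)^2
      ≤ ∑' k : ℕ, ((lam ^ k : ℝ) ^ (5/2:ℝ) * (if k = 0 then (0:ℝ) else f (k-1))^2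
          - (lam ^ (k+1) : ℝ) ^ (5/2:ℝ) * f k * f (k+1)) := by
  have hl0 : (0:ℝ) < lam := lt_trans one_pos hlam
  set θ : ℝ := lam ^ (-(5/4) : ℝ) with hθdef
  have hθ0 : 0 < θ := Real.rpow_pos_of_pos hl0 _
  have hθ1 : θ < 1 := Real.rpow_lt_one_of_one_lt_of_neg hlam (by norm_num)
  have hq0 : (0:ℝ) < lam ^ (-(1/2)-2*ε : ℝ) := Real.rpow_pos_of_pos hl0 _
  have hq1 : lam ^ (-(1/2)-2*ε : ℝ) < 1 :=
    Real.rpow_lt_one_of_one_lt_of_neg hlam (by linarith)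
  have hsg : Summable fun k : ℕ => (lam ^ (-(1/2)-2*ε : ℝ))^k :=
    summable_geometric_of_lt_one hq0.le hq1
  have hF1s : Summable fun k : ℕ =>
      (lam ^ k : ℝ) ^ (5/2:ℝ) * (if k = 0 then (0:ℝ) else f (k-1))^2 :=
    Summable.of_norm_bounded (hsg.mul_left (B * lam ^ ((3:ℝ)+2*ε)))
      (fun k => by simpa using bound_F1 hlam hB hk k)
  have hF2s : Summable fun k : ℕ => (lam ^ (k+1) : ℝ) ^ (5/2:ℝ) * f k * f (k+1) :=
    Summable.of_norm_bounded (hsg.mul_left (B * lam ^ ((1:ℝ)-ε)))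
      (fun k => by rw [Real.norm_eq_abs]; exact bound_F2 hlam hB (fun j => (hf j).le) hk k)
  have hQs : Summable fun k : ℕ => lam ^ (((k:ℝ)+1)*(5/2)) * f k ^ 2 :=
    Summable.of_nonneg_of_le
      (fun k => by positivity) (bound_Qt hlam hB hk)
      (hsg.mul_left (B * lam ^ ((5:ℝ)/2)))
  set Q : ℝ := ∑' k : ℕ, lam ^ (((k:ℝ)+1)*(5/2)) * f k ^ 2 with hQdef
  have hQ0 : 0 ≤ Q := tsum_nonneg (fun k => by positivity)
  -- step (i) : split and identify the gain term
  have hsplit : (∑' k : ℕ, ((lam ^ k : ℝ) ^ (5/2:ℝ) * (if k = 0 then (0:ℝ) else f (k-1))^2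
          - (lam ^ (k+1) : ℝ) ^ (5/2:ℝ) * f k * f (k+1)))
      = (∑' k : ℕ, (lam ^ k : ℝ) ^ (5/2:ℝ) * (if k = 0 then (0:ℝ) else f (k-1))^2)
        - ∑' k : ℕ, (lam ^ (k+1) : ℝ) ^ (5/2:ℝ) * f k * f (k+1) :=
    Summable.tsum_sub hF1s hF2s
  have hgain : (∑' k : ℕ, (lam ^ k : ℝ) ^ (5/2:ℝ) * (if k = 0 then (0:ℝ) else f (k-1))^2)
      = Q := by
    rw [Summable.tsum_eq_zero_add hF1s]
    simp only [if_pos rfl, Nat.succ_ne_zero, if_false, Nat.succ_sub_one]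
    have hcg : ∀ k : ℕ, (lam ^ (k+1) : ℝ) ^ (5/2:ℝ) * (f k)^2
        = lam ^ (((k:ℝ)+1)*(5/2)) * f k ^ 2 := by
      intro k
      rw [pow_rpow_eq hl0]
      congr 2
      push_cast; ring
    rw [tsum_congr hcg, hQdef]
    norm_num
  -- step (ii) : cross term bounded by θ * Q
  have hQsucc : Summable fun k : ℕ => lam ^ (((((k+1):ℕ):ℝ)+1)*(5/2:ℝ)) * f (k+1) ^ 2 := by
    have h := hQs.comp_injective Nat.succ_injective
    exact h.congr (fun k => rfl)
  have hAM : ∀ k : ℕ, (lam ^ (k+1) : ℝ) ^ (5/2:ℝ) * f k * f (k+1)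
      ≤ θ/2 * (lam ^ (((k:ℝ)+1)*(5/2)) * f k ^ 2)
        + θ⁻¹/2 * (lam ^ (-(5/2) : ℝ) * (lam ^ (((((k+1):ℕ):ℝ)+1)*(5/2:ℝ)) * f (k+1) ^ 2)) := by
    intro k
    have hab : f k * f (k+1) ≤ θ/2 * f k^2 + θ⁻¹/2 * f (k+1)^2 := by
      rw [← sub_nonneg]
      have h : θ/2 * f k^2 + θ⁻¹/2 * f (k+1)^2 - f k * f (k+1)
          = (θ^2 * f k^2 + f (k+1)^2 - 2*θ*(f k * f (k+1)))/(2*θ) := by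
        field_simp
      rw [h]
      apply div_nonneg (by nlinarith [sq_nonneg (θ * f k - f (k+1))]) (by linarith)
    have hW0 : (0:ℝ) ≤ lam ^ (((k:ℝ)+1)*(5/2)) := (Real.rpow_pos_of_pos hl0 _).le
    have hWc : (lam ^ (k+1) : ℝ) ^ (5/2:ℝ) = lam ^ (((k:ℝ)+1)*(5/2)) := by
      rw [pow_rpow_eq hl0]; congr 1; push_cast; ring
    have e : lam ^ (-(5/2) : ℝ) * lam ^ (((((k+1):ℕ):ℝ)+1)*(5/2:ℝ))
        = lam ^ (((k:ℝ)+1)*(5/2)) := by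
      rw [← Real.rpow_add hl0]; congr 1; push_cast; ring
    calc (lam ^ (k+1) : ℝ) ^ (5/2:ℝ) * f k * f (k+1)
        = lam ^ (((k:ℝ)+1)*(5/2)) * (f k * f (k+1)) := by rw [hWc]; ring
      _ ≤ lam ^ (((k:ℝ)+1)*(5/2)) * (θ/2 * f k^2 + θ⁻¹/2 * f (k+1)^2) :=
          mul_le_mul_of_nonneg_left hab hW0
      _ = θ/2 * (lam ^ (((k:ℝ)+1)*(5/2)) * f k ^ 2)
          + θ⁻¹/2 * (lam ^ (-(5/2) : ℝ) * (lam ^ (((((k+1):ℕ):ℝ)+1)*(5/2:ℝ)) * f (k+1) ^ 2)) := by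
          linear_combination (θ⁻¹/2 * f (k+1)^2) * e.symm
  have hRs2 : Summable fun k : ℕ =>
      lam ^ (-(5/2) : ℝ) * (lam ^ (((((k+1):ℕ):ℝ)+1)*(5/2:ℝ)) * f (k+1) ^ 2) :=
    hQsucc.mul_left _
  have hcross : (∑' k : ℕ, (lam ^ (k+1) : ℝ) ^ (5/2:ℝ) * f k * f (k+1)) ≤ θ * Q := by
    have hsucc_le : (∑' k : ℕ, lam ^ (((((k+1):ℕ):ℝ)+1)*(5/2:ℝ)) * f (k+1) ^ 2) ≤ Q := by
      rw [hQdef]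
      exact Summable.tsum_le_tsum_of_inj Nat.succ Nat.succ_injective
        (fun c _ => by positivity) (fun i => le_rfl) hQsucc hQs
    calc (∑' k : ℕ, (lam ^ (k+1) : ℝ) ^ (5/2:ℝ) * f k * f (k+1))
        ≤ ∑' k : ℕ, (θ/2 * (lam ^ (((k:ℝ)+1)*(5/2)) * f k ^ 2)
            + θ⁻¹/2 * (lam ^ (-(5/2) : ℝ) * (lam ^ (((((k+1):ℕ):ℝ)+1)*(5/2:ℝ)) * f (k+1) ^ 2))) :=
          Summable.tsum_le_tsum hAM hF2s ((hQs.mul_left _).add (hRs2.mul_left _))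
      _ = θ/2 * Q + θ⁻¹/2 * (lam ^ (-(5/2) : ℝ)
            * ∑' k : ℕ, lam ^ (((((k+1):ℕ):ℝ)+1)*(5/2:ℝ)) * f (k+1) ^ 2) := by
          rw [Summable.tsum_add (hQs.mul_left _) (hRs2.mul_left _),
            Summable.tsum_mul_left _ hQs, Summable.tsum_mul_left _ hRs2,
            Summable.tsum_mul_left _ hQsucc]
      _ ≤ θ/2 * Q + θ⁻¹/2 * (lam ^ (-(5/2) : ℝ) * Q) := by
          gcongr
      _ = θ * Q := by
          have hθθ : θ * θ = lam ^ (-(5/2) : ℝ) := by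
            rw [hθdef, ← Real.rpow_add hl0]; norm_num
          rw [← hθθ]
          field_simp
          ring
  -- step (iii) : the sum of f is controlled by sqrt Q
  have hfQ : ∀ k : ℕ, f k ≤ Real.sqrt Q * θ^(k+1) := by
    intro k
    apply sq_le_to_le (hf k).le hQ0 (pow_nonneg hθ0.le _)
    have hQk : lam ^ (((k:ℝ)+1)*(5/2)) * f k ^ 2 ≤ Q :=
      Summable.le_tsum hQs k (fun j _ => by positivity)
    have hW0 : (0:ℝ) < lam ^ (((k:ℝ)+1)*(5/2)) := Real.rpow_pos_of_pos hl0 _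
    have hθk : (θ^(k+1))^2 = (lam ^ (((k:ℝ)+1)*(5/2)))⁻¹ := by
      rw [hθdef, ← pow_mul, ← rpow_mul_nat hl0 ((k+1)*2) (-(5/4)), ← Real.rpow_neg hl0.le]
      congr 1; push_cast; ring
    rw [hθk, ← div_eq_mul_inv, le_div_iff₀ hW0]
    linarith [hQk]
  have hsum_fQ : Summable fun k : ℕ => Real.sqrt Q * θ^(k+1) :=
    ((summable_geometric_of_lt_one hθ0.le hθ1).mul_left (Real.sqrt Q * θ)).congr
      (fun k => by rw [pow_succ]; ring)
  have hsum_f : Summable f := Summable.of_nonneg_of_le (fun k => (hf k).le) hfQ hsum_fQ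
  have hφle : ∑' k, f k ≤ Real.sqrt Q * (θ * (1-θ)⁻¹) := by
    calc ∑' k, f k ≤ ∑' k : ℕ, Real.sqrt Q * θ^(k+1) := Summable.tsum_le_tsum hfQ hsum_f hsum_fQ
      _ = ∑' k : ℕ, (Real.sqrt Q * θ) * θ^k :=
          tsum_congr (fun k => by rw [pow_succ]; ring)
      _ = (Real.sqrt Q * θ) * ∑' k : ℕ, θ^k :=
          Summable.tsum_mul_left _ (summable_geometric_of_lt_one hθ0.le hθ1)
      _ = Real.sqrt Q * (θ * (1-θ)⁻¹) := by
          rw [tsum_geometric_of_lt_one hθ0.le hθ1]; ring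
  -- step (iv) : conclusion
  have hS0 : 0 < θ * (1-θ)⁻¹ := mul_pos hθ0 (inv_pos.mpr (by linarith))
  have hφ0 : 0 ≤ ∑' k, f k := tsum_nonneg fun k => (hf k).le
  have hφ2 : (∑' k, f k)^2 ≤ (θ * (1-θ)⁻¹)^2 * Q := by
    have h := pow_le_pow_left₀ hφ0 hφle 2
    rw [mul_pow, Real.sq_sqrt hQ0] at h
    linarith [h]
  rw [hsplit, hgain]
  have h1 : (1-θ)/(θ * (1-θ)⁻¹)^2 * (∑' k, f k)^2
      ≤ (1-θ)/(θ * (1-θ)⁻¹)^2 * ((θ * (1-θ)⁻¹)^2 * Q) :=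
    mul_le_mul_of_nonneg_left hφ2 (div_nonneg (by linarith) (by positivity))
  have h2 : (1-θ)/(θ * (1-θ)⁻¹)^2 * ((θ * (1-θ)⁻¹)^2 * Q) = (1-θ)*Q := by
    have hθne : θ ≠ 0 := ne_of_gt hθ0
    have h1θ : (1:ℝ) - θ ≠ 0 := ne_of_gt (by linarith)
    field_simp
  linarith [hcross, h1, h2]

/-- Friedlander–Pavlović, Katz–Pavlović: there is `j₀` such that any positive
solution of the dyadic Euler model that lies in `H^s` for some `s > 5/2` initially, and
satisfies `a_{j'}(0)² > λ_{j'}^{−3−ε}` for some `j' > j₀`, has its `H^{3/2+ε}` norm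
become unbounded in finite time. -/
theorem euler_dyadic_blowup (lam : ℝ) (hlam : 1 < lam) :
    ∃ j0 : ℕ, ∀ ε s : ℝ, 0 < ε → 5 / 2 < s →
      ∀ a : ℕ → ℝ → ℝ, IsEulerSol lam a →
        (∀ j : ℕ, 0 < a j 0) →
        Hsq lam s (fun j => a j 0) < ⊤ →
        (∃ j' : ℕ, j0 < j' ∧ (lam ^ j') ^ (-3 - ε) < (a j' 0) ^ 2) →
        ∃ T : ℝ, 0 < T ∧
          (⨆ t ∈ Set.Ico (0 : ℝ) T, Hsq lam (3 / 2 + ε) (fun j => a j t)) = ⊤ := by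
  use 0
  intro ε s hε hs a hsol hpos hH hseed
  by_contra hcon
  push_neg at hcon
  have hl0 : (0:ℝ) < lam := lt_trans one_pos hlam
  have hpos2 := euler_pos hlam hsol hpos
  -- uniform bounds from the contradiction hypothesis
  have key : ∀ T : ℝ, 0 < T → ∃ B : ℝ, 0 ≤ B ∧ ∀ t, t ∈ Set.Ico (0:ℝ) T →
      ∀ k : ℕ, a k t ^ 2 ≤ B * lam ^ (-((k:ℝ)*(3+2*ε))) := by
    intro T hT
    refine ⟨(⨆ t ∈ Set.Ico (0:ℝ) T, Hsq lam (3/2+ε) (fun j => a j t)).toReal,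
      ENNReal.toReal_nonneg, ?_⟩
    intro t ht k
    have hsup := hcon T hT
    have h1 : ENNReal.ofReal ((lam ^ k : ℝ) ^ (2*(3/2+ε)) * a k t ^ 2)
        ≤ Hsq lam (3/2+ε) (fun j => a j t) := by
      unfold Hsq
      exact ENNReal.le_tsum k
    have h2 : Hsq lam (3/2+ε) (fun j => a j t)
        ≤ ⨆ t ∈ Set.Ico (0:ℝ) T, Hsq lam (3/2+ε) (fun j => a j t) :=
      le_biSup (f := fun t => Hsq lam (3/2+ε) (fun j => a j t)) ht
    have h3 := (ENNReal.ofReal_le_iff_le_toReal hsup).mp (le_trans h1 h2)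
    rw [pow_rpow_eq hl0] at h3
    have hpow : (0:ℝ) < lam ^ ((k:ℝ) * (2*(3/2+ε))) := Real.rpow_pos_of_pos hl0 _
    have he : (-((k:ℝ)*(3+2*ε))) = -((k:ℝ)*(2*(3/2+ε))) := by ring
    rw [he, Real.rpow_neg hl0.le, ← div_eq_mul_inv, le_div_iff₀ hpow]
    calc a k t ^2 * lam ^ ((k:ℝ)*(2*(3/2+ε)))
        = lam ^ ((k:ℝ)*(2*(3/2+ε))) * a k t^2 := by ring
      _ ≤ _ := h3
  -- summability of ∑ a k t given such a bound
  have hρ0 : (0:ℝ) < lam ^ (-(3/2+ε) : ℝ) := Real.rpow_pos_of_pos hl0 _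
  have hρ1 : lam ^ (-(3/2+ε) : ℝ) < 1 :=
    Real.rpow_lt_one_of_one_lt_of_neg hlam (by linarith)
  have hsum : ∀ B : ℝ, 0 ≤ B → ∀ t : ℝ, 0 ≤ t →
      (∀ k : ℕ, a k t ^2 ≤ B * lam ^ (-((k:ℝ)*(3+2*ε)))) →
      Summable fun k => a k t := by
    intro B hB t ht hb
    exact Summable.of_nonneg_of_le (fun k => (hpos2 k t ht).le)
      (bound_f hlam hB (fun k => (hpos2 k t ht).le) hb)
      ((summable_geometric_of_lt_one hρ0.le hρ1).mul_left _)
  -- the value β = φ(1/2) > 0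
  obtain ⟨B₁, hB₁, hbd₁⟩ := key 1 one_pos
  have hhalf : (1/2 : ℝ) ∈ Set.Ico (0:ℝ) 1 := by norm_num
  have hsumhalf : Summable fun k => a k (1/2) :=
    hsum B₁ hB₁ _ (by norm_num) (hbd₁ _ hhalf)
  set β : ℝ := ∑' k, a k (1/2) with hβdef
  have hβ : 0 < β := lt_of_lt_of_le (hpos2 0 (1/2) (by norm_num))
    (Summable.le_tsum hsumhalf 0 (fun j _ => (hpos2 j (1/2) (by norm_num)).le))
  -- constants
  set θ : ℝ := lam ^ (-(5/4):ℝ) with hθdef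
  have hθ0 : 0 < θ := Real.rpow_pos_of_pos hl0 _
  have hθ1 : θ < 1 := Real.rpow_lt_one_of_one_lt_of_neg hlam (by norm_num)
  set c1 : ℝ := (1-θ)/(θ*(1-θ)⁻¹)^2 with hc1def
  have hc1 : 0 < c1 := div_pos (by linarith) (pow_pos (mul_pos hθ0 (inv_pos.mpr (by linarith))) 2)
  set T : ℝ := 1 + 2/(c1*β) with hTdef
  have hT0 : 0 < T := by
    rw [hTdef]
    have : 0 < 2/(c1*β) := div_pos two_pos (mul_pos hc1 hβ)
    linarith
  obtain ⟨B, hB, hbd⟩ := key T hT0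
  have hmemhalf : (1/2:ℝ) ∈ Set.Ioo (0:ℝ) T := by
    constructor
    · norm_num
    · have : 0 < 2/(c1*β) := div_pos two_pos (mul_pos hc1 hβ)
      rw [hTdef]; linarith
  -- term-by-term derivatives
  have hDa : ∀ (k : ℕ) (y : ℝ), y ∈ Set.Ioo (0:ℝ) T → HasDerivAt (a k)
      ((lam ^ k : ℝ) ^ (5/2:ℝ) * (if k = 0 then (0:ℝ) else a (k-1) y)^2
        - (lam ^ (k+1) : ℝ)^(5/2:ℝ) * a k y * a (k+1) y) y :=
    fun k y hy => (hsol k y hy.1.le).hasDerivAt (Ici_mem_nhds hy.1)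
  have hq0 : (0:ℝ) < lam ^ (-(1/2)-2*ε : ℝ) := Real.rpow_pos_of_pos hl0 _
  have hq1 : lam ^ (-(1/2)-2*ε : ℝ) < 1 :=
    Real.rpow_lt_one_of_one_lt_of_neg hlam (by linarith)
  have hu : Summable (fun k : ℕ =>
      (B * lam ^ ((3:ℝ)+2*ε) + B * lam ^ ((1:ℝ)-ε)) * (lam ^ (-(1/2)-2*ε:ℝ))^k) :=
    (summable_geometric_of_lt_one hq0.le hq1).mul_left _
  have hbound : ∀ (k : ℕ) (y : ℝ), y ∈ Set.Ioo (0:ℝ) T →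
      ‖(lam ^ k : ℝ) ^ (5/2:ℝ) * (if k = 0 then (0:ℝ) else a (k-1) y)^2
        - (lam ^ (k+1) : ℝ)^(5/2:ℝ) * a k y * a (k+1) y‖
      ≤ (B * lam ^ ((3:ℝ)+2*ε) + B * lam ^ ((1:ℝ)-ε)) * (lam ^ (-(1/2)-2*ε:ℝ))^k := by
    intro k y hy
    have h := hbd y ⟨hy.1.le, hy.2⟩
    rw [Real.norm_eq_abs]
    have habs : |(lam ^ k : ℝ) ^ (5/2:ℝ) * (if k = 0 then (0:ℝ) else a (k-1) y)^2
        - (lam ^ (k+1) : ℝ)^(5/2:ℝ) * a k y * a (k+1) y|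
        ≤ |(lam ^ k : ℝ) ^ (5/2:ℝ) * (if k = 0 then (0:ℝ) else a (k-1) y)^2|
          + |(lam ^ (k+1) : ℝ)^(5/2:ℝ) * a k y * a (k+1) y| := by
      rw [sub_eq_add_neg]
      exact (abs_add_le _ _).trans_eq (by rw [abs_neg])
    have h1 := bound_F1 hlam hB (f := fun k => a k y) h k
    have h2 := bound_F2 hlam hB (f := fun k => a k y)
      (fun j => (hpos2 j y hy.1.le).le) h k
    have e : (B * lam ^ ((3:ℝ)+2*ε) + B * lam ^ ((1:ℝ)-ε)) * (lam ^ (-(1/2)-2*ε:ℝ))^k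
        = (B * lam ^ ((3:ℝ)+2*ε)) * (lam ^ (-(1/2)-2*ε:ℝ))^k
          + (B * lam ^ ((1:ℝ)-ε)) * (lam ^ (-(1/2)-2*ε:ℝ))^k := by ring
    rw [e]
    linarith [habs, h1, h2]
  -- derivative of φ on (0,T)
  have hφd : ∀ y ∈ Set.Ioo (0:ℝ) T, HasDerivAt (fun z => ∑' k, a k z)
      (∑' k : ℕ, ((lam ^ k : ℝ) ^ (5/2:ℝ) * (if k = 0 then (0:ℝ) else a (k-1) y)^2
        - (lam ^ (k+1) : ℝ)^(5/2:ℝ) * a k y * a (k+1) y)) y :=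
    fun y hy => hasDerivAt_tsum_of_isPreconnected hu isOpen_Ioo
      (convex_Ioo (0:ℝ) T).isPreconnected hDa hbound hmemhalf hsumhalf hy
  have hφpos : ∀ y ∈ Set.Ioo (0:ℝ) T, 0 < ∑' k, a k y := by
    intro y hy
    exact lt_of_lt_of_le (hpos2 0 y hy.1.le)
      (Summable.le_tsum (hsum B hB y hy.1.le (hbd y ⟨hy.1.le, hy.2⟩)) 0
        (fun j _ => (hpos2 j y hy.1.le).le))
  have hkey : ∀ y ∈ Set.Ioo (0:ℝ) T, c1 * (∑' k, a k y)^2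
      ≤ ∑' k : ℕ, ((lam ^ k : ℝ) ^ (5/2:ℝ) * (if k = 0 then (0:ℝ) else a (k-1) y)^2
        - (lam ^ (k+1) : ℝ)^(5/2:ℝ) * a k y * a (k+1) y) := by
    intro y hy
    rw [hc1def, hθdef]
    exact core_estimate hlam hε hB (fun k => hpos2 k y hy.1.le) (hbd y ⟨hy.1.le, hy.2⟩)
  -- Riccati comparison
  set ψ : ℝ → ℝ := fun y => (∑' k, a k y)⁻¹ + c1 * y with hψdef
  have hψd : ∀ y ∈ Set.Ioo (0:ℝ) T, HasDerivAt ψ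
      (-(∑' k : ℕ, ((lam ^ k : ℝ) ^ (5/2:ℝ) * (if k = 0 then (0:ℝ) else a (k-1) y)^2
        - (lam ^ (k+1) : ℝ)^(5/2:ℝ) * a k y * a (k+1) y))/(∑' k, a k y)^2 + c1) y := by
    intro y hy
    have h1 := (hφd y hy).inv (ne_of_gt (hφpos y hy))
    have h2 : HasDerivAt (fun z : ℝ => c1 * z) c1 y := by
      simpa using (hasDerivAt_id y).const_mul c1
    exact h1.add h2
  have hanti : AntitoneOn ψ (Set.Ioo 0 T) := by
    apply antitoneOn_of_deriv_nonpos (convex_Ioo 0 T)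
    · intro y hy
      exact (hψd y hy).differentiableAt.continuousAt.continuousWithinAt
    · rw [interior_Ioo]
      intro y hy
      exact (hψd y hy).differentiableAt.differentiableWithinAt
    · rw [interior_Ioo]
      intro y hy
      rw [(hψd y hy).deriv]
      have hp := hφpos y hy
      have hk := hkey y hy
      have h2 : c1 ≤ (∑' k : ℕ, ((lam ^ k : ℝ) ^ (5/2:ℝ)
            * (if k = 0 then (0:ℝ) else a (k-1) y)^2
          - (lam ^ (k+1) : ℝ)^(5/2:ℝ) * a k y * a (k+1) y))/(∑' k, a k y)^2 :=
        (le_div_iff₀ (pow_pos hp 2)).mpr (by linarith [hk])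
      rw [neg_div]
      linarith [h2]
  -- the contradiction
  set t1 : ℝ := 1/2 + 2/(c1*β) with ht1def
  have ht1mem : t1 ∈ Set.Ioo (0:ℝ) T := by
    constructor
    · rw [ht1def]
      have : 0 < 2/(c1*β) := div_pos two_pos (mul_pos hc1 hβ)
      linarith
    · rw [ht1def, hTdef]; linarith
  have hhle : (1/2:ℝ) ≤ t1 := by
    rw [ht1def]
    have : 0 < 2/(c1*β) := div_pos two_pos (mul_pos hc1 hβ)
    linarith
  have hmono := hanti hmemhalf ht1mem hhle
  have hpt1 : 0 < (∑' k, a k t1) := hφpos t1 ht1mem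
  have hinv : 0 < (∑' k, a k t1)⁻¹ := inv_pos.mpr hpt1
  have harith : c1 * t1 = c1*(1/2) + 2/β := by
    rw [ht1def]
    field_simp
  have hβinv : β⁻¹ = 1/β := inv_eq_one_div β
  have h2β : (0:ℝ) < 1/β := one_div_pos.mpr hβ
  rw [hψdef] at hmono
  simp only [← hβdef] at hmono
  -- hmono : (∑' a k t1)⁻¹ + c1 * t1 ≤ β⁻¹ + c1 * (1/2)
  have h5 : 2/β = 2*(1/β) := by ring
  linarith [hmono, harith, hinv, h2β, hβinv, h5]
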